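/- Let g : (0, +∞) → ℝ be differentiable with g(s) > 0, g'(s) > 0 for all s, and suppose s·g(s)²·g'(s) = g(s)⁴ + g(s)³ + λ·g(s) + μ for constants λ, μ ∈ ℝ with the right-hand side positive for all s. Then such g cannot exist. -/

import Mathlib

open Set Filter Real

lemma mono_aux {f f' : ℝ → ℝ} {a b : ℝ} (hab : a ≤ b)
    (hd : ∀ x ∈ Set.Icc a b, HasDerivAt f (f' x) x)
    (h0 : ∀ x ∈ Set.Ioo a b, 0 ≤ f' x) : f a ≤ f b := by
  have hmono : MonotoneOn f (Set.Icc a b) := by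
    apply monotoneOn_of_deriv_nonneg (convex_Icc a b)
    · exact fun x hx => (hd x hx).continuousAt.continuousWithinAt
    · intro x hx
      rw [interior_Icc] at hx
      exact ((hd x (Set.mem_Icc_of_Ioo hx)).differentiableAt).differentiableWithinAt
    · intro x hx
      rw [interior_Icc] at hx
      rw [(hd x (Set.mem_Icc_of_Ioo hx)).deriv]
      exact h0 x hx
  exact hmono (Set.left_mem_Icc.2 hab) (Set.right_mem_Icc.2 hab) hab

lemma alg_aux (lam mu L M x : ℝ) (hL0 : 0 ≤ L) (hLx : L < x) (hxM : x < M)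
    (hPL : L^4 + L^3 + lam*L + mu = 0) (hPM : M^4 + M^3 + lam*M + mu = 0) :
    x^4 + x^3 + lam*x + mu ≤ 0 := by
  have hx0 : 0 < x := lt_of_le_of_lt hL0 hLx
  have hM0 : 0 < M := lt_trans hx0 hxM
  have hq : 0 ≤ x^2 + (1+L+M)*x + (L^2+M^2+L*M+L+M) := by
    nlinarith [sq_nonneg x, sq_nonneg L, sq_nonneg M, mul_nonneg hL0 hM0.le,
      mul_nonneg (by linarith : (0:ℝ) ≤ 1+L+M) hx0.le]
  have hid : (M-L)*(x^4 + x^3 + lam*x + mu) = (M - x)*(L^4 + L^3 + lam*L + mu)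
      + (x - L)*(M^4 + M^3 + lam*M + mu)
      - (M-L)*((x-L)*(M-x)*(x^2 + (1+L+M)*x + (L^2+M^2+L*M+L+M))) := by
    ring
  rw [hPL, hPM] at hid
  have hnn : 0 ≤ (x-L)*(M-x)*(x^2 + (1+L+M)*x + (L^2+M^2+L*M+L+M)) :=
    mul_nonneg (mul_nonneg (by linarith) (by linarith)) hq
  nlinarith [hid, hnn, mul_nonneg (by linarith : (0:ℝ) ≤ M-L) hnn]

set_option maxHeartbeats 1600000 in
theorem stmt_13 (lam mu : ℝ) :
    ¬ ∃ g : ℝ → ℝ,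
      (∀ s, 0 < s → DifferentiableAt ℝ g s) ∧
      (∀ s, 0 < s → 0 < g s) ∧
      (∀ s, 0 < s → 0 < deriv g s) ∧
      (∀ s, 0 < s → 0 < (g s)^4 + (g s)^3 + lam * g s + mu) ∧
      (∀ s, 0 < s → s * (g s)^2 * deriv g s = (g s)^4 + (g s)^3 + lam * g s + mu) := by
  rintro ⟨g, hdiff, hpos, hder, hP, hode⟩
  set P : ℝ → ℝ := fun x => x^4 + x^3 + lam * x + mu with hPdef
  have hPcont : Continuous P := by
    have : Continuous fun x : ℝ => x^4 + x^3 + lam * x + mu := by continuity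
    exact hPdef ▸ this
  have hPg : ∀ s, 0 < s → s * (g s)^2 * deriv g s = P (g s) := hode
  have hPpos : ∀ s, 0 < s → 0 < P (g s) := hP
  -- strict monotonicity
  have hSM : StrictMonoOn g (Set.Ioi 0) := by
    apply strictMonoOn_of_deriv_pos (convex_Ioi 0)
    · exact fun x hx => (hdiff x hx).continuousAt.continuousWithinAt
    · intro x hx
      rw [interior_Ioi] at hx
      exact hder x hx
  have hM : ∀ s t, 0 < s → s ≤ t → g s ≤ g t := fun s t hs hst =>
    hSM.monotoneOn (Set.mem_Ioi.2 hs) (Set.mem_Ioi.2 (lt_of_lt_of_le hs hst)) hst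
  -- the lower limit L
  set u : ℕ → ℝ := fun n => g (1/(n+1)) with hu
  have hun : ∀ n : ℕ, (0:ℝ) < 1/(n+1) := by intro n; positivity
  have hu_anti : Antitone u := by
    intro m n hmn
    apply hM _ _ (hun n)
    apply one_div_le_one_div_of_le (by positivity)
    have : (m:ℝ) ≤ n := Nat.cast_le.2 hmn
    linarith
  have hbddu : BddBelow (Set.range u) := by
    refine ⟨0, ?_⟩
    rintro _ ⟨n, rfl⟩
    exact (hpos _ (hun n)).le
  set L : ℝ := ⨅ n, u n with hL
  have hLtend : Tendsto u atTop (nhds L) := tendsto_atTop_ciInf hu_anti hbddu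
  have hL0 : 0 ≤ L := le_ciInf fun n => (hpos _ (hun n)).le
  have hLle : ∀ s, 0 < s → L ≤ g s := by
    intro s hs
    obtain ⟨n, hn⟩ := exists_nat_gt (1/s)
    have h1 : (1:ℝ)/(n+1) ≤ s := by
      rw [div_le_iff₀ (by positivity)]
      have h2 : 1/s < (n:ℝ) + 1 := by linarith
      rw [div_lt_iff₀ hs] at h2
      nlinarith
    exact le_trans (ciInf_le hbddu n) (hM _ _ (hun n) h1)
  have hLlt : ∀ s, 0 < s → L < g s := by
    intro s hs
    exact lt_of_le_of_lt (hLle (s/2) (by positivity))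
      (hSM (Set.mem_Ioi.2 (by positivity)) (Set.mem_Ioi.2 hs) (by linarith))
  have hPL : 0 ≤ P L := by
    have htd : Tendsto (fun n => P (u n)) atTop (nhds (P L)) :=
      (hPcont.tendsto L).comp hLtend
    exact ge_of_tendsto htd (Eventually.of_forall fun n => (hPpos _ (hun n)).le)
  -- intermediate values below g 1
  have hsurjL : ∀ x, L < x → x ≤ g 1 → ∃ s, 0 < s ∧ g s = x := by
    intro x hx1 hx2
    obtain ⟨n, hn⟩ := exists_lt_of_ciInf_lt (hL ▸ hx1 : ⨅ n, u n < x)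
    have hle1 : 1/((n:ℝ)+1) ≤ 1 := by
      rw [div_le_one (by positivity)]
      have : (0:ℝ) ≤ n := Nat.cast_nonneg n
      linarith
    have hc : ContinuousOn g (Set.Icc (1/((n:ℝ)+1)) 1) := fun t ht =>
      (hdiff t (lt_of_lt_of_le (hun n) ht.1)).continuousAt.continuousWithinAt
    have hiv := intermediate_value_Icc hle1 hc
    obtain ⟨s, hs, hgs⟩ := hiv ⟨hn.le, hx2⟩
    exact ⟨s, lt_of_lt_of_le (hun n) hs.1, hgs⟩
  rcases hPL.lt_or_eq with hPLpos | hPLeq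
  · -- Case 1 : P L > 0 : blow-up of log near 0
    have hL1 : L ≤ g 1 := (hLlt 1 one_pos).le
    obtain ⟨y, hyI, hy⟩ := isCompact_Icc.exists_isMinOn (Set.nonempty_Icc.2 hL1)
      hPcont.continuousOn
    set c := P y with hc
    have hc0 : 0 < c := by
      rcases eq_or_lt_of_le hyI.1 with h | h
      · rw [hc, ← h]; exact hPLpos
      · obtain ⟨s, hs, hgs⟩ := hsurjL y h hyI.2
        rw [hc, ← hgs]; exact hPpos s hs
    have hcle : ∀ t, 0 < t → t ≤ 1 → c ≤ P (g t) := fun t ht ht1 =>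
      hy ⟨hLle t ht, hM t 1 ht ht1⟩
    have hg1 : 0 < g 1 := hpos 1 one_pos
    set s0 : ℝ := Real.exp (-(((g 1)^3 + 1)/(3*c))) with hs0def
    have hs0 : 0 < s0 := Real.exp_pos _
    have hs01 : s0 ≤ 1 := Real.exp_le_one_iff.mpr (neg_nonpos_of_nonneg (by positivity))
    have hmono := mono_aux (f := fun t => (g t)^3 - 3*c*Real.log t)
      (f' := fun x => 3*(g x)^2*deriv g x - 3*c*x⁻¹) hs01 ?_ ?_
    · have hlog1 : Real.log 1 = 0 := Real.log_one
      have hlogs0 : Real.log s0 = -(((g 1)^3 + 1)/(3*c)) := Real.log_exp _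
      have hcc : (3*c) * (((g 1)^3 + 1)/(3*c)) = (g 1)^3 + 1 :=
        mul_div_cancel₀ _ (by positivity)
      have hgpos : 0 < (g s0)^3 := pow_pos (hpos s0 hs0) 3
      simp only [hlog1, hlogs0] at hmono
      nlinarith [hmono, hgpos, hcc]
    · intro x hx
      have hx0 : 0 < x := lt_of_lt_of_le hs0 hx.1
      exact HasDerivAt.sub (((hdiff x hx0).hasDerivAt.pow 3).congr_deriv (by ring))
        ((Real.hasDerivAt_log (ne_of_gt hx0)).const_mul (3*c))
    · intro x hx
      have hx0 : 0 < x := lt_of_lt_of_le hs0 hx.1.le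
      show 0 ≤ 3*(g x)^2*deriv g x - 3*c*x⁻¹
      have e : 3*(g x)^2*deriv g x - 3*c*x⁻¹ = 3*(x*(g x)^2*deriv g x - c)/x := by
        field_simp
      rw [e, hPg x hx0]
      have hcx : c ≤ P (g x) := hcle x hx0 hx.2.le
      apply div_nonneg _ hx0.le
      linarith
  -- Case P L = 0
  · by_cases hB : BddAbove (g '' Set.Ioi (0:ℝ))
    · -- bounded : the upper limit M exists
      set v : ℕ → ℝ := fun n => g (n+1) with hv
      have hvn : ∀ n : ℕ, (0:ℝ) < n+1 := by intro n; positivity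
      have hv_mono : Monotone v := by
        intro m n hmn
        apply hM _ _ (hvn m)
        have : (m:ℝ) ≤ n := Nat.cast_le.2 hmn
        linarith
      have hbddv : BddAbove (Set.range v) := by
        obtain ⟨B, hBub⟩ := hB
        refine ⟨B, ?_⟩
        rintro _ ⟨n, rfl⟩
        exact hBub ⟨n+1, Set.mem_Ioi.2 (hvn n), rfl⟩
      set M : ℝ := ⨆ n, v n with hMdef
      have hMtend : Tendsto v atTop (nhds M) := tendsto_atTop_ciSup hv_mono hbddv
      have hgleM : ∀ s, 0 < s → g s ≤ M := by
        intro s hs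
        obtain ⟨n, hn⟩ := exists_nat_gt s
        exact le_trans (hM s (n+1) hs (by linarith)) (le_ciSup hbddv n)
      have hg1 : 0 < g 1 := hpos 1 one_pos
      have hg1M : g 1 < M :=
        lt_of_lt_of_le (hSM (Set.mem_Ioi.2 one_pos) (Set.mem_Ioi.2 two_pos) one_lt_two)
          (hgleM 2 two_pos)
      have hM0 : 0 < M := lt_trans hg1 hg1M
      have hPM : 0 ≤ P M := by
        have htd : Tendsto (fun n => P (v n)) atTop (nhds (P M)) :=
          (hPcont.tendsto M).comp hMtend
        exact ge_of_tendsto htd (Eventually.of_forall fun n => (hPpos _ (hvn n)).le)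
      have hsurjU : ∀ x, g 1 ≤ x → x < M → ∃ s, 0 < s ∧ g s = x := by
        intro x hx1 hx2
        obtain ⟨n, hn⟩ := exists_lt_of_lt_ciSup (hMdef ▸ hx2 : x < ⨆ n, v n)
        have hle1 : (1:ℝ) ≤ (n:ℝ)+1 := by
          have : (0:ℝ) ≤ n := Nat.cast_nonneg n
          linarith
        have hc : ContinuousOn g (Set.Icc 1 ((n:ℝ)+1)) := fun t ht =>
          (hdiff t (lt_of_lt_of_le one_pos ht.1)).continuousAt.continuousWithinAt
        have hiv := intermediate_value_Icc hle1 hc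
        obtain ⟨s, hs, hgs⟩ := hiv ⟨hx1, hn.le⟩
        exact ⟨s, lt_of_lt_of_le one_pos hs.1, hgs⟩
      rcases hPM.lt_or_eq with hPMpos | hPMeq
      · -- Case 2 : P M > 0 : blow-up of log at infinity
        obtain ⟨y, hyI, hy⟩ := isCompact_Icc.exists_isMinOn (Set.nonempty_Icc.2 hg1M.le)
          hPcont.continuousOn
        set c := P y with hc
        have hc0 : 0 < c := by
          rcases eq_or_lt_of_le hyI.2 with h | h
          · rw [hc, h]; exact hPMpos
          · obtain ⟨s, hs, hgs⟩ := hsurjU y hyI.1 h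
            rw [hc, ← hgs]; exact hPpos s hs
        have hcle : ∀ t, 1 ≤ t → c ≤ P (g t) := fun t ht =>
          hy ⟨hM 1 t one_pos ht, hgleM t (lt_of_lt_of_le one_pos ht)⟩
        set T : ℝ := Real.exp ((M^3 + 1)/(3*c)) with hTdef
        have hT1 : 1 ≤ T := Real.one_le_exp (by positivity)
        have hmono := mono_aux (f := fun t => (g t)^3 - 3*c*Real.log t)
          (f' := fun x => 3*(g x)^2*deriv g x - 3*c*x⁻¹) hT1 ?_ ?_
        · have hlog1 : Real.log 1 = 0 := Real.log_one
          have hlogT : Real.log T = (M^3 + 1)/(3*c) := Real.log_exp _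
          have hcc : (3*c) * ((M^3 + 1)/(3*c)) = M^3 + 1 :=
            mul_div_cancel₀ _ (by positivity)
          have hgT : (g T)^3 ≤ M^3 := by
            have h1 := hgleM T (lt_of_lt_of_le one_pos hT1)
            have h2 := (hpos T (lt_of_lt_of_le one_pos hT1)).le
            exact pow_le_pow_left₀ h2 h1 3
          have hg13 : 0 < (g 1)^3 := pow_pos hg1 3
          simp only [hlog1, hlogT] at hmono
          nlinarith [hmono, hgT, hcc, hg13]
        · intro x hx
          have hx0 : 0 < x := lt_of_lt_of_le one_pos hx.1
          exact HasDerivAt.sub (((hdiff x hx0).hasDerivAt.pow 3).congr_deriv (by ring))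
            ((Real.hasDerivAt_log (ne_of_gt hx0)).const_mul (3*c))
        · intro x hx
          have hx0 : 0 < x := lt_of_lt_of_le one_pos hx.1.le
          show 0 ≤ 3*(g x)^2*deriv g x - 3*c*x⁻¹
          have e : 3*(g x)^2*deriv g x - 3*c*x⁻¹ = 3*(x*(g x)^2*deriv g x - c)/x := by
            field_simp
          rw [e, hPg x hx0]
          have hcx : c ≤ P (g x) := hcle x hx.1.le
          apply div_nonneg _ hx0.le
          linarith
      · -- Case 4 : P L = 0 and P M = 0 : convexity contradiction
        have hLx : L < g 1 := hLlt 1 one_pos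
        have halg := alg_aux lam mu L M (g 1) hL0 hLx hg1M
          (by have := hPLeq; simp only [hPdef] at this; linarith)
          (by have := hPMeq; simp only [hPdef] at this; linarith)
        have hPx : 0 < P (g 1) := hPpos 1 one_pos
        simp only [hPdef] at hPx
        linarith
    · -- Case 3 : unbounded : g tends to infinity
      set X : ℝ := 1 + |lam| + |mu| with hXdef
      have hX1 : 1 ≤ X := by
        have := abs_nonneg lam
        have := abs_nonneg mu
        linarith
      have hPx4 : ∀ x, X ≤ x → x^4/2 ≤ P x := by
        intro x hx
        have hx1 : 1 ≤ x := le_trans hX1 hx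
        simp only [hPdef]
        nlinarith [neg_abs_le lam, neg_abs_le mu, abs_nonneg lam, abs_nonneg mu,
          mul_le_mul_of_nonneg_left hx (by linarith : (0:ℝ) ≤ x),
          mul_le_mul_of_nonneg_left hx1 (mul_nonneg (by linarith : (0:ℝ) ≤ x) (abs_nonneg mu)),
          sq_nonneg x, mul_pos (lt_of_lt_of_le one_pos hx1) (lt_of_lt_of_le one_pos hx1)]
      obtain ⟨z, hzmem, hz⟩ := not_bddAbove_iff.mp hB X
      obtain ⟨s1, hs1pos, rfl⟩ := hzmem
      have hs1pos' : (0:ℝ) < s1 := hs1pos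
      set T : ℝ := s1 * Real.exp 4 with hTdef
      have hsT : s1 ≤ T := by
        nlinarith [Real.one_le_exp (by norm_num : (0:ℝ) ≤ 4)]
      have hXgt : ∀ t, s1 ≤ t → X < g t := fun t ht =>
        lt_of_lt_of_le hz (hM s1 t hs1pos' ht)
      have hmono := mono_aux (f := fun t => -(g t)⁻¹ - (1/2)*Real.log t)
        (f' := fun y => -(-deriv g y / (g y)^2) - (1/2)*y⁻¹) hsT ?_ ?_
      · have hlogT : Real.log T = Real.log s1 + 4 := by
          rw [hTdef, Real.log_mul (ne_of_gt hs1pos') (Real.exp_ne_zero 4), Real.log_exp]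
        have hgs1 : 0 < g s1 := hpos s1 hs1pos'
        have hgT : 0 < g T := hpos T (lt_of_lt_of_le hs1pos' hsT)
        have hinv1 : (g s1)⁻¹ < 1 := by
          rw [inv_lt_one_iff₀]
          right
          exact lt_of_le_of_lt hX1 (hXgt s1 le_rfl)
        have hinvT : 0 < (g T)⁻¹ := inv_pos.2 hgT
        simp only [hlogT] at hmono
        linarith
      · intro t ht
        have ht0 : 0 < t := lt_of_lt_of_le hs1pos' ht.1
        exact HasDerivAt.sub (((hdiff t ht0).hasDerivAt.inv (ne_of_gt (hpos t ht0))).neg)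
          ((Real.hasDerivAt_log (ne_of_gt ht0)).const_mul (1/2))
      · intro t ht
        have ht0 : 0 < t := lt_of_lt_of_le hs1pos' ht.1.le
        have hgt : 0 < g t := hpos t ht0
        show 0 ≤ -(-deriv g t / (g t)^2) - (1/2)*t⁻¹
        have e : -(-deriv g t / (g t)^2) - (1/2)*t⁻¹
            = (2*t*deriv g t - (g t)^2)/(2*t*(g t)^2) := by
          field_simp
        rw [e]
        apply div_nonneg _ (by positivity)
        have h4 : (g t)^4/2 ≤ P (g t) := hPx4 (g t) (hXgt t ht.1.le).le
        have hodet := hPg t ht0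
        have hcomb : (g t)^4/2 ≤ t * (g t)^2 * deriv g t := le_trans h4 (le_of_eq hodet.symm)
        have h5 : 0 ≤ (g t)^2*(2*t*deriv g t - (g t)^2) := by nlinarith [hcomb]
        exact (mul_nonneg_iff_of_pos_left (by positivity : (0:ℝ) < (g t)^2)).mp h5
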